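/- Assume the ternary representation setup. Then the number of columns of type 1 in Q other than e^P is at most 2r − 2. -/

import Mathlib

namespace LoosePaper

open Set
open scoped Matroid

variable {α β : Type*}

/-- A circuit of a matroid: a minimal dependent set. -/
def Circuit (M : Matroid α) (C : Set α) : Prop :=
  M.Dep C ∧ ∀ D, M.Dep D → D ⊆ C → D = C

/-- The rank of a matroid: the (common) cardinality of its bases. -/
noncomputable def rank (M : Matroid α) : ℕ :=
  sInf {n | ∃ B, M.IsBase B ∧ B.ncard = n}

/-- An element is loose if every circuit containing it has size at least the rank. -/
def Loose (M : Matroid α) (e : α) : Prop :=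
  e ∈ M.E ∧ ∀ C, Circuit M C → e ∈ C → rank M ≤ C.ncard

/-- An element is free if every circuit containing it is spanning. -/
def FreeElt (M : Matroid α) (e : α) : Prop :=
  e ∈ M.E ∧ ∀ C, Circuit M C → e ∈ C → M.closure C = M.E

/-- A coloop: an element contained in every base. -/
def Coloop (M : Matroid α) (e : α) : Prop :=
  e ∈ M.E ∧ ∀ B, M.IsBase B → e ∈ B

def NoColoops (M : Matroid α) : Prop := ∀ e, ¬ Coloop M e

/-- A matroid is simple if every pair of its elements is independent. -/
def Simple (M : Matroid α) : Prop :=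
  ∀ e ∈ M.E, ∀ f ∈ M.E, M.Indep {e, f}

/-- A matroid is paving if every circuit has size at least the rank. -/
def Paving (M : Matroid α) : Prop :=
  ∀ C, Circuit M C → rank M ≤ C.ncard

/-- `M` is representable over the field `F`. -/
def Representable (M : Matroid α) (F : Type*) [Field F] : Prop :=
  ∃ (ι : Type) (v : α → ι → F),
    ∀ I, I ⊆ M.E → (M.Indep I ↔ LinearIndependent F (fun x : I => v x.1))

/-- `N` is the vector matroid, on ground set all of `η`, of the matrix whose
column labelled by `c : η` is `A c`. -/
def IsVectorMatroidOn (F : Type*) [Field F] {η ι : Type*} (A : η → ι → F)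
    (N : Matroid η) : Prop :=
  N.E = Set.univ ∧ ∀ I : Set η, (N.Indep I ↔ LinearIndependent F (fun x : I => A x.1))

/-- `φ` is an isomorphism from `M` to `N`. -/
def IsIsoTo (M : Matroid α) (N : Matroid β) (φ : α → β) : Prop :=
  Set.BijOn φ M.E N.E ∧ ∀ I, I ⊆ M.E → (M.Indep I ↔ N.Indep (φ '' I))

/-- The matrix `[I_r | D]` of the matroid `M_r`; the column `Sum.inl i` is the
`i`-th standard basis vector, the column `Sum.inr 0` (the distinguished element `z`)
is the all-ones vector, and for `1 ≤ j ≤ r-1` the column `Sum.inr j` has ones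
exactly in rows `0` and `j` (`0`-indexed). -/
def MrMatrix (r : ℕ) : (Fin r ⊕ Fin r) → Fin r → ZMod 2
  | Sum.inl i => fun k => if k = i then 1 else 0
  | Sum.inr j => fun k =>
      if j.val = 0 then 1 else if k.val = 0 ∨ k = j then 1 else 0

/-- The matrix `[I_r | D]` of the matroid `N_r`; the column `Sum.inr 0`
(the distinguished element `z`) is `(0,1,…,1)ᵀ`, and for `1 ≤ j ≤ r-2` the column
`Sum.inr j` has ones exactly in rows `0`, `1` and `j+1` (`0`-indexed). -/
def NrMatrix (r : ℕ) : (Fin r ⊕ Fin (r - 1)) → Fin r → ZMod 2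
  | Sum.inl i => fun k => if k = i then 1 else 0
  | Sum.inr j => fun k =>
      if j.val = 0 then (if k.val = 0 then 0 else 1)
      else if k.val = 0 ∨ k.val = 1 ∨ k.val = j.val + 1 then 1 else 0

/-- The matrix `[I_r | D]` of the matroid `L_r`; the columns of `D` are the all-ones
vector, `(1,1,0,…,0)ᵀ`, `(1,0,1,0,…,0)ᵀ` and `(0,1,1,0,…,0)ᵀ`. -/
def LrMatrix (r : ℕ) : (Fin r ⊕ Fin 4) → Fin r → ZMod 2
  | Sum.inl i => fun k => if k = i then 1 else 0
  | Sum.inr j => fun k =>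
      if j = 0 then 1
      else if j = 1 then (if k.val = 0 ∨ k.val = 1 then 1 else 0)
      else if j = 2 then (if k.val = 0 ∨ k.val = 2 then 1 else 0)
      else if k.val = 1 ∨ k.val = 2 then 1 else 0

/-- The matrix `[I_r | D]` of the matroid `J_r`; the columns of `D` are
`(0,1,1,…,1)ᵀ`, `(1,1,1,0,…,0)ᵀ`, `(1,1,0,1,0,…,0)ᵀ` and `(1,0,1,1,0,…,0)ᵀ`. -/
def JrMatrix (r : ℕ) : (Fin r ⊕ Fin 4) → Fin r → ZMod 2
  | Sum.inl i => fun k => if k = i then 1 else 0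
  | Sum.inr j => fun k =>
      if j = 0 then (if k.val = 0 then 0 else 1)
      else if j = 1 then (if k.val = 0 ∨ k.val = 1 ∨ k.val = 2 then 1 else 0)
      else if j = 2 then (if k.val = 0 ∨ k.val = 1 ∨ k.val = 3 then 1 else 0)
      else if k.val = 0 ∨ k.val = 2 ∨ k.val = 3 then 1 else 0

/-- A matrix over `GF(3)` whose vector matroid is `U_{2,4}`. -/
def U24Matrix : Fin 4 → Fin 2 → ZMod 3
  | 0 => fun k => if k = 0 then 1 else 0
  | 1 => fun k => if k = 1 then 1 else 0
  | 2 => fun _ => 1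
  | 3 => fun k => if k = 0 then 1 else 2

/-- A `GF(3)`-matrix representing the matroid obtained from a circuit
`{e, c_0, …, c_{n-1}}` (where `e` is the element `Sum.inl ()`) by 2-summing a copy
of `U_{2,4}` across each element `c_d` with `d ∈ D`.  For `d ∉ D` the element
`Sum.inr (d, 0)` is `c_d`, and for `d ∈ D` the elements `Sum.inr (d, j)`,
`j = 0, 1, 2`, are the three elements of the copy of `U_{2,4}` other than its
basepoint. -/
def thetaMatrix (n : ℕ) (D : Finset (Fin n)) :
    (Unit ⊕ Fin n × Fin 3) → (Fin n ⊕ Fin n) → ZMod 3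
  | Sum.inl _ => fun row => Sum.elim (fun _ => 1) (fun _ => 0) row
  | Sum.inr (d, j) => fun row =>
      let ed : (Fin n ⊕ Fin n) → ZMod 3 :=
        Sum.elim (fun i => if i = d then 1 else 0) (fun _ => 0)
      let wd : (Fin n ⊕ Fin n) → ZMod 3 :=
        Sum.elim (fun _ => 0) (fun i => if i = d then 1 else 0)
      if d ∈ D then
        (if j = 0 then wd row else if j = 1 then ed row + wd row else ed row - wd row)
      else ed row

/-- The ground set of the 2-sum construction: the circuit element `e`, the
untouched circuit elements `c_d` for `d ∉ D`, and three `U_{2,4}`-elements for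
each `d ∈ D`. -/
def thetaGround (n : ℕ) (D : Finset (Fin n)) : Set (Unit ⊕ Fin n × Fin 3) :=
  {x | ∀ d : Fin n, ∀ j : Fin 3, x = Sum.inr (d, j) → (j = 0 ∨ d ∈ D)}

/-- Sublemma 3.2.6: in the ternary representation setup, the
number of columns of type 1 in `Q` other than `e^P` is at most `2r - 2`. -/
theorem ternary_setup_type_one {α : Type*} (r : ℕ) (hr : 5 ≤ r) (M : Matroid α) (hsimple : Simple M)
    (e : α) (hloose : Loose M e) (hrank : rank M = r)
    (v : α → Fin r → ZMod 3)
    (hrep : ∀ I, I ⊆ M.E →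
      (M.Indep I ↔ LinearIndependent (ZMod 3) (fun x : I => v x.1)))
    (b : Fin r → α) (hbinj : Function.Injective b)
    (hbase : M.IsBase (Set.range b)) (heb : e ∉ Set.range b)
    (hstd : ∀ i j : Fin r, v (b i) j = if j = i then 1 else 0)
    (he0 : v e ⟨0, by omega⟩ = 0)
    (he1 : ∀ i : Fin r, i ≠ ⟨0, by omega⟩ → v e i = 1) :
    {f | f ∈ M.E ∧ f ∉ Set.range b ∧ f ≠ e ∧ v f ⟨0, by omega⟩ ≠ 0 ∧
      {i : Fin r | i ≠ ⟨0, by omega⟩ ∧ v f i ≠ 0}.ncard = 1}.ncard ≤ 2 * r - 2 := by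
  classical
  set z : Fin r := ⟨0, by omega⟩ with hz
  set idx : α → Fin r := fun f =>
    if h : ∃ i : Fin r, {i' : Fin r | i' ≠ z ∧ v f i' ≠ 0} = {i} then h.choose else z with hidx
  have hidx_spec : ∀ f : α, {i' : Fin r | i' ≠ z ∧ v f i' ≠ 0}.ncard = 1 →
      {i' : Fin r | i' ≠ z ∧ v f i' ≠ 0} = {idx f} := by
    intro f hf
    obtain ⟨i, hi⟩ := Set.ncard_eq_one.mp hf
    have h : ∃ i : Fin r, {i' : Fin r | i' ≠ z ∧ v f i' ≠ 0} = {i} := ⟨i, hi⟩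
    simp only [hidx, dif_pos h]
    exact h.choose_spec
  set φ : α → Fin r × ZMod 3 := fun f => (idx f, (v f z)⁻¹ * v f (idx f)) with hφ
  set t : Finset (Fin r × ZMod 3) :=
    (Finset.univ.erase z) ×ˢ (Finset.univ.erase (0 : ZMod 3)) with ht
  have hmem : ∀ f ∈ {f | f ∈ M.E ∧ f ∉ Set.range b ∧ f ≠ e ∧ v f z ≠ 0 ∧
      {i : Fin r | i ≠ z ∧ v f i ≠ 0}.ncard = 1}, φ f ∈ (↑t : Set (Fin r × ZMod 3)) := by
    intro f hf
    obtain ⟨-, -, -, hfz, hfc⟩ := hf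
    have hsupp := hidx_spec f hfc
    have hidxmem : idx f ≠ z ∧ v f (idx f) ≠ 0 := by
      have : idx f ∈ {i' : Fin r | i' ≠ z ∧ v f i' ≠ 0} := by rw [hsupp]; rfl
      exact this
    simp only [ht, hφ, Finset.coe_product, Set.mem_prod, Finset.coe_erase, Set.mem_diff,
      Finset.coe_univ, Set.mem_univ, true_and, Set.mem_singleton_iff]
    exact ⟨hidxmem.1, mul_ne_zero (inv_ne_zero hfz) hidxmem.2⟩
  have hinj : Set.InjOn φ {f | f ∈ M.E ∧ f ∉ Set.range b ∧ f ≠ e ∧ v f z ≠ 0 ∧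
      {i : Fin r | i ≠ z ∧ v f i ≠ 0}.ncard = 1} := by
    intro f hf g hg hfg
    by_contra hne
    obtain ⟨hfE, -, -, hfz, hfc⟩ := hf
    obtain ⟨hgE, -, -, hgz, hgc⟩ := hg
    have hsf := hidx_spec f hfc
    have hsg := hidx_spec g hgc
    have hieq : idx f = idx g := congrArg Prod.fst hfg
    have hratio : (v f z)⁻¹ * v f (idx f) = (v g z)⁻¹ * v g (idx f) := by
      have := congrArg Prod.snd hfg
      simpa [hφ, hieq] using this
    set c : ZMod 3 := v g z * (v f z)⁻¹ with hc
    have heq : ∀ j, v g j = c * v f j := by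
      intro j
      by_cases hjz : j = z
      · subst hjz
        rw [hc, mul_assoc, inv_mul_cancel₀ hfz, mul_one]
      by_cases hji : j = idx f
      · subst hji
        calc v g (idx f) = v g z * ((v g z)⁻¹ * v g (idx f)) := by
              rw [← mul_assoc, mul_inv_cancel₀ hgz, one_mul]
          _ = v g z * ((v f z)⁻¹ * v f (idx f)) := by rw [hratio]
          _ = c * v f (idx f) := by rw [hc]; ring
      · have hf0 : v f j = 0 := by
          by_contra h0
          have : j ∈ {i' : Fin r | i' ≠ z ∧ v f i' ≠ 0} := ⟨hjz, h0⟩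
          rw [hsf] at this
          exact hji this
        have hg0 : v g j = 0 := by
          by_contra h0
          have : j ∈ {i' : Fin r | i' ≠ z ∧ v g i' ≠ 0} := ⟨hjz, h0⟩
          rw [hsg] at this
          exact hji (hieq ▸ this)
        rw [hf0, hg0, mul_zero]
    -- {f, g} is independent by simplicity, hence linearly independent
    have hIE : ({f, g} : Set α) ⊆ M.E := by
      rintro x (rfl | rfl)
      · exact hfE
      · exact hgE
    have hLI := (hrep {f, g} hIE).mp (hsimple f hfE g hgE)
    set xf : ({f, g} : Set α) := ⟨f, Set.mem_insert _ _⟩ with hxf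
    set xg : ({f, g} : Set α) := ⟨g, Set.mem_insert_of_mem _ rfl⟩ with hxg
    have hxne : xf ≠ xg := fun h => hne (congrArg Subtype.val h)
    have hl := linearIndependent_iff.mp hLI
      (Finsupp.single xg 1 - Finsupp.single xf c) ?_
    · have h4 := DFunLike.congr_fun hl xg
      rw [Finsupp.sub_apply, Finsupp.single_eq_same, Finsupp.single_eq_of_ne' hxne,
        Finsupp.coe_zero] at h4
      simp at h4
    · rw [map_sub, Finsupp.linearCombination_single, Finsupp.linearCombination_single]
      funext j
      simp only [Pi.sub_apply, Pi.smul_apply, smul_eq_mul, one_mul, Pi.zero_apply]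
      rw [heq j]; ring
  have hcard := Set.ncard_le_ncard_of_injOn φ hmem hinj (t.finite_toSet)
  rw [Set.ncard_coe_finset] at hcard
  have htc : t.card = (r - 1) * 2 := by
    have h3 : (Finset.univ.erase (0 : ZMod 3)).card = 2 := by decide
    rw [ht, Finset.card_product, Finset.card_erase_of_mem (Finset.mem_univ _),
      Finset.card_univ, Fintype.card_fin, h3]
  omega


end LoosePaper
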